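/- Let m be a nonzero polynomial of degree σ over K[X], let s in Z^n be a shift, let F be an n-by-1 column of polynomials of degree less than σ, and let P be the s-Popov solution basis for (m, F), i.e., the unique matrix in s-Popov form whose rows form a basis of {p in K[X]^n : p·F ≡ 0 mod m}. Then the sum of the degrees of the diagonal entries of P is at most σ. -/

import Mathlib

open Polynomial

/-- s-Popov form (pivots on the diagonal, monic, dominating their columns). -/
def IsPopov {K : Type*} [Field K] {n : ℕ} (s : Fin n → ℤ)
    (P : Matrix (Fin n) (Fin n) K[X]) : Prop :=
  (∀ i, (P i i).Monic) ∧
  (∀ i j, i ≠ j → (P i j).degree < (P j j).degree) ∧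
  (∀ i j, P i j ≠ 0 → ((P i j).natDegree : ℤ) + s j ≤ ((P i i).natDegree : ℤ) + s i) ∧
  (∀ i j, i < j → P i j ≠ 0 → ((P i j).natDegree : ℤ) + s j < ((P i i).natDegree : ℤ) + s i)

/-- Key lemma: any nonzero combination of the rows of an s-Popov matrix has,
in some column `j`, degree at least the degree of the pivot `P j j`. -/
lemma popov_key {K : Type*} [Field K] {n : ℕ} (s : Fin n → ℤ)
    (P : Matrix (Fin n) (Fin n) K[X]) (hPopov : IsPopov s P)
    (c : Fin n → K[X]) (hc : c ≠ 0) :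
    ∃ j, ((P j j).natDegree : WithBot ℕ) ≤ (∑ i, c i * P i j).degree := by
  classical
  obtain ⟨hmonic, _, h3, h4⟩ := hPopov
  have hPne : ∀ i, P i i ≠ 0 := fun i => (hmonic i).ne_zero
  set S : Finset (Fin n) := Finset.univ.filter (fun i => c i ≠ 0) with hSdef
  have hS : S.Nonempty := by
    obtain ⟨i, hi⟩ := Function.ne_iff.1 hc
    exact ⟨i, Finset.mem_filter.2 ⟨Finset.mem_univ _, by simpa using hi⟩⟩
  set w : Fin n → ℤ := fun i => ((c i).natDegree : ℤ) + (P i i).natDegree + s i with hw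
  obtain ⟨j, hjS, hmax⟩ := S.exists_max_image (fun i => w i * n + (i : ℤ)) hS
  have hcj : c j ≠ 0 := (Finset.mem_filter.1 hjS).2
  have hjn : ((j : ℕ) : ℤ) < n := by exact_mod_cast j.2
  have hw1 : ∀ i ∈ S, w i ≤ w j := by
    intro i hi
    have h := hmax i hi
    by_contra hlt
    push_neg at hlt
    have hin : ((i : ℕ) : ℤ) < n := by exact_mod_cast i.2
    have hi0 : (0 : ℤ) ≤ (i : ℕ) := Int.ofNat_nonneg _
    have hj0 : (0 : ℤ) ≤ (j : ℕ) := Int.ofNat_nonneg _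
    have hmul : (w j + 1) * n ≤ w i * n :=
      mul_le_mul_of_nonneg_right (by omega) (by positivity)
    nlinarith
  have hw2 : ∀ i ∈ S, j < i → w i < w j := by
    intro i hi hji
    have h := hmax i hi
    rcases lt_or_eq_of_le (hw1 i hi) with h1 | h1
    · exact h1
    · exfalso
      have hji' : ((j : ℕ) : ℤ) < ((i : ℕ) : ℤ) := by exact_mod_cast hji
      rw [h1] at h
      omega
  refine ⟨j, ?_⟩
  set D : WithBot ℕ := (((c j).natDegree + (P j j).natDegree : ℕ) : WithBot ℕ) with hDdef
  have hD : (c j * P j j).degree = D := by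
    rw [degree_mul, degree_eq_natDegree hcj, degree_eq_natDegree (hPne j), hDdef]
    exact_mod_cast rfl
  have hsmall : ∀ i ∈ Finset.univ.erase j, (c i * P i j).degree < D := by
    intro i hi
    have hij : i ≠ j := (Finset.mem_erase.1 hi).1
    by_cases h0 : c i * P i j = 0
    · rw [h0, degree_zero]; exact WithBot.bot_lt_coe _
    · obtain ⟨hci, hPij⟩ := mul_ne_zero_iff.1 h0
      have hiS : i ∈ S := by simp [hSdef, hci]
      have hdi : (c i * P i j).degree = (((c i).natDegree + (P i j).natDegree : ℕ) : WithBot ℕ) := by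
        rw [degree_mul, degree_eq_natDegree hci, degree_eq_natDegree hPij]
        exact_mod_cast rfl
      rw [hdi, hDdef]
      have hkey : (c i).natDegree + (P i j).natDegree < (c j).natDegree + (P j j).natDegree := by
        rcases lt_or_gt_of_ne hij with hlt | hgt
        · have := h4 i j hlt hPij
          have := hw1 i hiS
          simp only [hw] at *
          omega
        · have := h3 i j hPij
          have := hw2 i hiS hgt
          simp only [hw] at *
          omega
      exact_mod_cast hkey
  have hsum : ∑ i, c i * P i j
      = c j * P j j + ∑ i ∈ Finset.univ.erase j, c i * P i j :=
    (Finset.add_sum_erase _ _ (Finset.mem_univ j)).symm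
  have hrest : (∑ i ∈ Finset.univ.erase j, c i * P i j).degree < D :=
    lt_of_le_of_lt (degree_sum_le _ _)
      ((Finset.sup_lt_iff (WithBot.bot_lt_coe _)).2 hsmall)
  have hdeg : (∑ i, c i * P i j).degree = D := by
    rw [hsum, degree_add_eq_left_of_degree_lt (by rw [hD]; exact hrest), hD]
  rw [hdeg, hDdef]
  exact_mod_cast Nat.le_add_left _ _

/-- if P is the s-Popov solution basis for (m, F) with m of degree
σ and deg F < σ, then the sum of the degrees of the diagonal entries of P is at
most σ. -/
theorem sum_pivot_degrees_le {K : Type*} [Field K] {n : ℕ}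
    (M : K[X]) (hM : M ≠ 0) (F : Fin n → K[X]) (hF : ∀ i, (F i).degree < M.degree)
    (s : Fin n → ℤ) (P : Matrix (Fin n) (Fin n) K[X])
    (hPopov : IsPopov s P)
    (hsol : ∀ i, M ∣ ∑ j, P i j * F j)
    (hspan : ∀ p : Fin n → K[X], (M ∣ ∑ j, p j * F j) →
      p ∈ Submodule.span K[X] (Set.range fun i => P i)) :
    ∑ i, (P i i).natDegree ≤ M.natDegree := by
  classical
  set M' : K[X] := M * C M.leadingCoeff⁻¹ with hM'def
  have hM' : M'.Monic := monic_mul_leadingCoeff_inv hM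
  have hdegM' : M'.degree = M.degree := degree_mul_leadingCoeff_inv _ hM
  have hMdvd : ∀ x : K[X], M' ∣ x → M ∣ x := fun x h =>
    dvd_trans ⟨C M.leadingCoeff⁻¹, rfl⟩ h
  -- the K-linear map from ∏ᵢ K[X]_{< deg Pᵢᵢ} to K[X]_{< deg M}
  set Φ : (∀ i, degreeLT K ((P i i).natDegree)) →ₗ[K] degreeLT K M.natDegree :=
    { toFun := fun q => ⟨(∑ i, (q i : K[X]) * F i) %ₘ M', by
        rw [mem_degreeLT]
        calc ((∑ i, (q i : K[X]) * F i) %ₘ M').degree < M'.degree :=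
              degree_modByMonic_lt _ hM'
          _ = (M.natDegree : WithBot ℕ) := by rw [hdegM', degree_eq_natDegree hM]⟩
      map_add' := fun a b => Subtype.ext (by
        simp only [Pi.add_apply, Submodule.coe_add, add_mul, Finset.sum_add_distrib]
        exact add_modByMonic _ _)
      map_smul' := fun r a => Subtype.ext (by
        simp only [Pi.smul_apply, SetLike.val_smul, RingHom.id_apply]
        rw [← smul_modByMonic, Finset.smul_sum]
        congr 1
        exact Finset.sum_congr rfl fun i _ => smul_mul_assoc _ _ _) } with hΦdef
  have hinj : Function.Injective Φ := by
    rw [injective_iff_map_eq_zero]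
    intro q hq
    have hq0 : (∑ i, (q i : K[X]) * F i) %ₘ M' = 0 := congrArg Subtype.val hq
    have hdvd : M ∣ ∑ i, (q i : K[X]) * F i :=
      hMdvd _ ((modByMonic_eq_zero_iff_dvd hM').1 hq0)
    have hmem := hspan (fun i => (q i : K[X])) hdvd
    rw [Submodule.mem_span_range_iff_exists_fun] at hmem
    obtain ⟨c, hcP⟩ := hmem
    have hc0 : c = 0 := by
      by_contra hc0
      obtain ⟨j, hj⟩ := popov_key s P hPopov c hc0
      have hqj : ∑ i, c i * P i j = (q j : K[X]) := by
        have := congrFun hcP j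
        simpa [Finset.sum_apply, Pi.smul_apply, smul_eq_mul] using this
      have hlt : ((q j : K[X])).degree < ((P j j).natDegree : WithBot ℕ) :=
        mem_degreeLT.1 (q j).2
      rw [hqj] at hj
      exact absurd hlt (not_lt.2 hj)
    funext i
    have : (q i : K[X]) = 0 := by
      have := congrFun hcP i
      simp [hc0] at this
      exact this.symm
    exact Subtype.ext this
  have hfin : Module.Finite K (degreeLT K M.natDegree) :=
    Module.Finite.equiv (degreeLTEquiv K M.natDegree).symm
  have hfin' : ∀ m : ℕ, Module.Finite K (degreeLT K m) := fun m =>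
    Module.Finite.equiv (degreeLTEquiv K m).symm
  have hle := LinearMap.finrank_le_finrank_of_injective hinj
  have hdom : Module.finrank K (∀ i, degreeLT K ((P i i).natDegree))
      = ∑ i, (P i i).natDegree := by
    rw [Module.finrank_pi_fintype]
    exact Finset.sum_congr rfl fun i _ => by
      rw [(degreeLTEquiv K ((P i i).natDegree)).finrank_eq, Module.finrank_pi,
        Fintype.card_fin]
  have hcod : Module.finrank K (degreeLT K M.natDegree) = M.natDegree := by
    rw [(degreeLTEquiv K M.natDegree).finrank_eq, Module.finrank_pi, Fintype.card_fin]
  rw [hdom, hcod] at hle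
  exact hle
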